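/- Min-entropy of classical-quantum states: Let ρ_ABX be a normalized state on H_A ⊗ H_B ⊗ H_X of the form ρ_ABX = Σ_x p_x ρ^x_AB ⊗ |x⟩⟨x|_X, where {|x⟩} is an orthonormal basis of H_X, each ρ^x_AB is a normalized state on H_A ⊗ H_B, and (p_x) is a probability distribution. Then H_min(A|BX)_ρ = −log ( Σ_x p_x · 2^{−H_min(A|B)_{ρ^x}} ). -/

import Mathlib

open scoped Kronecker ComplexOrder Classical
open Matrix MeasureTheory

noncomputable section

/-- Positive semidefinite square root (junk value `0` if not PSD). -/
def psqrt {n : Type*} [Fintype n] [DecidableEq n] (ρ : Matrix n n ℂ) : Matrix n n ℂ :=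
  if h : ρ.PosSemidef then
    (h.1.eigenvectorUnitary : Matrix n n ℂ) *
      Matrix.diagonal ((↑) ∘ Real.sqrt ∘ h.1.eigenvalues) *
      (star h.1.eigenvectorUnitary : Matrix n n ℂ)
  else 0

/-- Trace norm `‖M‖₁ = tr √(MᴴM)`. -/
def traceNorm {n : Type*} [Fintype n] [DecidableEq n] (M : Matrix n n ℂ) : ℝ :=
  (psqrt (Mᴴ * M)).trace.re

/-- Moore–Penrose real power of a Hermitian matrix via the spectral decomposition
(junk value `0` for non-Hermitian input).  For negative exponents, zero eigenvalues are
sent to zero (`Real.rpow` convention), i.e. inverses are generalized inverses. -/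
def mpow {n : Type*} [Fintype n] [DecidableEq n] (ρ : Matrix n n ℂ) (p : ℝ) : Matrix n n ℂ :=
  if h : ρ.IsHermitian then
    (h.eigenvectorUnitary : Matrix n n ℂ) *
      Matrix.diagonal (fun i => ((h.eigenvalues i ^ p : ℝ) : ℂ)) *
      (star h.eigenvectorUnitary : Matrix n n ℂ)
  else 0

/-- Subnormalized state: positive semidefinite with trace at most one. -/
def IsSubnormalized {n : Type*} [Fintype n] (ρ : Matrix n n ℂ) : Prop :=
  ρ.PosSemidef ∧ ρ.trace.re ≤ 1

/-- Normalized state: positive semidefinite with trace one. -/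
def IsState {n : Type*} [Fintype n] (ρ : Matrix n n ℂ) : Prop :=
  ρ.PosSemidef ∧ ρ.trace = 1

/-- Fidelity `F(ρ,σ) = ‖√ρ √σ‖₁`. -/
def fidelity {n : Type*} [Fintype n] [DecidableEq n] (ρ σ : Matrix n n ℂ) : ℝ :=
  traceNorm (psqrt ρ * psqrt σ)

/-- Generalized fidelity of subnormalized states. -/
def gFidelity {n : Type*} [Fintype n] [DecidableEq n] (ρ σ : Matrix n n ℂ) : ℝ :=
  fidelity ρ σ + Real.sqrt ((1 - ρ.trace.re) * (1 - σ.trace.re))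

/-- Purified distance `P(ρ,σ) = √(1 − F̄(ρ,σ)²)`. -/
def pdist {n : Type*} [Fintype n] [DecidableEq n] (ρ σ : Matrix n n ℂ) : ℝ :=
  Real.sqrt (1 - gFidelity ρ σ ^ 2)

/-- Partial trace over the first tensor factor. -/
def ptraceFst {a b : Type*} [Fintype a] (M : Matrix (a × b) (a × b) ℂ) : Matrix b b ℂ :=
  Matrix.of fun i j => ∑ k, M (k, i) (k, j)

/-- Partial trace over the second tensor factor. -/
def ptraceSnd {a b : Type*} [Fintype b] (M : Matrix (a × b) (a × b) ℂ) : Matrix a a ℂ :=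
  Matrix.of fun i j => ∑ k, M (i, k) (j, k)

/-- Min-entropy `H_min(A|B)_ρ`, conditioning on the second factor. -/
def Hmin {a b : Type*} [Fintype a] [Fintype b] [DecidableEq a] [DecidableEq b]
    (ρ : Matrix (a × b) (a × b) ℂ) : ℝ :=
  sSup {x : ℝ | ∃ σ : Matrix b b ℂ, IsState σ ∧
    (((2 : ℝ) ^ (-x) : ℝ) • ((1 : Matrix a a ℂ) ⊗ₖ σ) - ρ).PosSemidef}

/-- Max-entropy `H_max(A|B)_ρ`, conditioning on the second factor. -/
def Hmax {a b : Type*} [Fintype a] [Fintype b] [DecidableEq a] [DecidableEq b]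
    (ρ : Matrix (a × b) (a × b) ℂ) : ℝ :=
  sSup {x : ℝ | ∃ σ : Matrix b b ℂ, IsState σ ∧
    x = Real.logb 2 (fidelity ρ ((1 : Matrix a a ℂ) ⊗ₖ σ) ^ 2)}

/-- Smooth min-entropy `H_min^ε(A|B)_ρ`. -/
def sHmin {a b : Type*} [Fintype a] [Fintype b] [DecidableEq a] [DecidableEq b]
    (ε : ℝ) (ρ : Matrix (a × b) (a × b) ℂ) : ℝ :=
  sSup {x : ℝ | ∃ ρ' : Matrix (a × b) (a × b) ℂ,
    IsSubnormalized ρ' ∧ pdist ρ ρ' ≤ ε ∧ x = Hmin ρ'}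

/-- Unconditional min-entropy `H_min(A)_ρ = −log‖ρ‖_∞`. -/
def HminU {n : Type*} [Fintype n] [DecidableEq n] (ρ : Matrix n n ℂ) : ℝ :=
  -Real.logb 2 ‖Matrix.toEuclideanCLM (𝕜 := ℂ) ρ‖

/-- Unconditional max-entropy `H_max(A)_ρ = 2 log tr √ρ`. -/
def HmaxU {n : Type*} [Fintype n] [DecidableEq n] (ρ : Matrix n n ℂ) : ℝ :=
  2 * Real.logb 2 ((psqrt ρ).trace.re)

/-- Smooth unconditional min-entropy. -/
def sHminU {n : Type*} [Fintype n] [DecidableEq n] (ε : ℝ) (ρ : Matrix n n ℂ) : ℝ :=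
  sSup {x : ℝ | ∃ ρ' : Matrix n n ℂ, IsSubnormalized ρ' ∧ pdist ρ ρ' ≤ ε ∧ x = HminU ρ'}

/-- Smooth unconditional max-entropy. -/
def sHmaxU {n : Type*} [Fintype n] [DecidableEq n] (ε : ℝ) (ρ : Matrix n n ℂ) : ℝ :=
  sInf {x : ℝ | ∃ ρ' : Matrix n n ℂ, IsSubnormalized ρ' ∧ pdist ρ ρ' ≤ ε ∧ x = HmaxU ρ'}

/-- Collision entropy `H₂(A|B)_ρ`. -/
def H2 {a b : Type*} [Fintype a] [Fintype b] [DecidableEq a] [DecidableEq b]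
    (ρ : Matrix (a × b) (a × b) ℂ) : ℝ :=
  sSup {x : ℝ | ∃ σ : Matrix b b ℂ, IsState σ ∧
    x = -Real.logb 2
      (((((1 : Matrix a a ℂ) ⊗ₖ mpow σ (-(1/4))) * ρ *
          ((1 : Matrix a a ℂ) ⊗ₖ mpow σ (-(1/4)))) ^ 2).trace.re)}

/-- The extension `𝟙_n ⊗ T` of a linear map `T` on matrices, acting on the second factor. -/
def idTensorLmap {A B n : Type*} [Fintype A] [Fintype B] [Fintype n]
    (T : Matrix A A ℂ →ₗ[ℂ] Matrix B B ℂ) (M : Matrix (n × A) (n × A) ℂ) :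
    Matrix (n × B) (n × B) ℂ :=
  Matrix.of fun i j => T (Matrix.of fun a a' => M (i.1, a) (j.1, a')) i.2 j.2

/-- The extension `T ⊗ 𝟙_n` of a linear map `T` on matrices, acting on the first factor. -/
def lmapTensorId {A B n : Type*} [Fintype A] [Fintype B] [Fintype n]
    (T : Matrix A A ℂ →ₗ[ℂ] Matrix B B ℂ) (M : Matrix (A × n) (A × n) ℂ) :
    Matrix (B × n) (B × n) ℂ :=
  Matrix.of fun i j => T (Matrix.of fun a a' => M (a, i.2) (a', j.2)) i.1 j.1

/-- Complete positivity of a linear map on matrices. -/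
def IsCPM {A B : Type*} [Fintype A] [Fintype B]
    (T : Matrix A A ℂ →ₗ[ℂ] Matrix B B ℂ) : Prop :=
  ∀ (n : ℕ) (M : Matrix (Fin n × A) (Fin n × A) ℂ),
    M.PosSemidef → (idTensorLmap T M).PosSemidef

/-- The projector `|Φ⟩⟨Φ|` onto the maximally entangled state
`|Φ⟩ = |A|^{-1/2} ∑ₓ |x⟩|x⟩`. -/
def maxEntProj (A : Type*) [Fintype A] [DecidableEq A] : Matrix (A × A) (A × A) ℂ :=
  Matrix.of fun p q =>
    ((if p.1 = p.2 then 1 else 0) * (if q.1 = q.2 then 1 else 0)) / (Fintype.card A : ℂ)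

/-- Choi–Jamiołkowski representation `J(T) = (𝟙_{A'} ⊗ T)(|Φ⟩⟨Φ|)`. -/
def choi {A B : Type*} [Fintype A] [Fintype B] [DecidableEq A]
    (T : Matrix A A ℂ →ₗ[ℂ] Matrix B B ℂ) : Matrix (A × B) (A × B) ℂ :=
  idTensorLmap T (maxEntProj A)

/-- Conjugation of a bipartite operator by `U ⊗ 𝟙_E`. -/
def conjFst {A E : Type*} [Fintype A] [Fintype E] [DecidableEq A] [DecidableEq E]
    (U : Matrix.unitaryGroup A ℂ) (ρ : Matrix (A × E) (A × E) ℂ) :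
    Matrix (A × E) (A × E) ℂ :=
  ((U : Matrix A A ℂ) ⊗ₖ (1 : Matrix E E ℂ)) * ρ *
    (((U : Matrix A A ℂ)ᴴ) ⊗ₖ (1 : Matrix E E ℂ))

/-- The swap operator `F(u ⊗ v) = v ⊗ u` as a matrix. -/
def swapMat (A : Type*) [Fintype A] [DecidableEq A] : Matrix (A × A) (A × A) ℂ :=
  Matrix.of fun i j => if i.1 = j.2 ∧ i.2 = j.1 then 1 else 0


attribute [local instance] Matrix.frobeniusNormedAddCommGroup Matrix.frobeniusNormedSpace

lemma aux_smul_psd {n : Type*} [Fintype n] {M : Matrix n n ℂ} (hM : M.PosSemidef) {r : ℝ}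
    (hr : 0 ≤ r) : (r • M).PosSemidef := by
  exact hM.smul hr

lemma aux_kron_psd {m n : Type*} [Fintype m] [Fintype n] [DecidableEq m] [DecidableEq n]
    {M : Matrix m m ℂ} {N : Matrix n n ℂ} (hM : M.PosSemidef) (hN : N.PosSemidef) :
    (M ⊗ₖ N).PosSemidef := by
  exact hM.kronecker hN

lemma aux_trace_re_nonneg {n : Type*} [Fintype n] {M : Matrix n n ℂ} (hM : M.PosSemidef) :
    0 ≤ M.trace.re := by
  have h : ∀ i, 0 ≤ (M i i).re := by
    intro i
    have h2 := hM.re_dotProduct_nonneg (Pi.single i 1)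
    have h3 : star (Pi.single i 1 : n → ℂ) ⬝ᵥ (M *ᵥ Pi.single i 1) = M i i := by
      classical
      simp [dotProduct, Matrix.mulVec, Pi.single_apply, Finset.sum_ite_eq,
        Finset.mul_sum, mul_ite]
    rwa [h3] at h2
  rw [Matrix.trace]
  rw [Complex.re_sum]
  exact Finset.sum_nonneg fun i _ => h i

lemma aux_trace_real {n : Type*} [Fintype n] {M : Matrix n n ℂ} (hM : M.IsHermitian) :
    M.trace = (M.trace.re : ℂ) := by
  have h : ∀ i, (M i i).im = 0 := by
    intro i
    have := congrFun (congrFun hM i) i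
    rw [Matrix.conjTranspose_apply] at this
    have := congrArg Complex.im this
    simp at this
    linarith
  apply Complex.ext
  · simp
  · rw [Matrix.trace, Complex.im_sum]
    simp [Matrix.diag, h]

lemma aux_one_sub_psd {n : Type*} [Fintype n] [DecidableEq n] {ρ : Matrix n n ℂ}
    (h : ρ.PosSemidef) (ht : ρ.trace = 1) : ((1 : Matrix n n ℂ) - ρ).PosSemidef := by
  have hH := h.isHermitian
  set U : Matrix n n ℂ := (hH.eigenvectorUnitary : Matrix n n ℂ) with hU
  have hUU : U * star U = 1 := (Matrix.mem_unitaryGroup_iff).mp hH.eigenvectorUnitary.2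
  have hUU' : star U * U = 1 := (Matrix.mem_unitaryGroup_iff').mp hH.eigenvectorUnitary.2
  have hsumC : (∑ j, (hH.eigenvalues j : ℂ)) = 1 := by
    have h2 : ρ.trace = (Matrix.diagonal (RCLike.ofReal ∘ hH.eigenvalues) : Matrix n n ℂ).trace := by
      conv_lhs => rw [hH.spectral_theorem, Unitary.conjStarAlgAut_apply]
      rw [Matrix.trace_mul_cycle, hUU', one_mul]
    rw [ht] at h2
    rw [Matrix.trace_diagonal] at h2
    exact h2.symm
  have hsum : ∑ j, hH.eigenvalues j = 1 := by
    have := congrArg Complex.re hsumC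
    simpa [Complex.re_sum] using this
  have heig : ∀ i, hH.eigenvalues i ≤ 1 := by
    intro i
    rw [← hsum]
    exact Finset.single_le_sum (fun j _ => h.eigenvalues_nonneg j) (Finset.mem_univ i)
  have key : (1 : Matrix n n ℂ) - ρ =
      U * Matrix.diagonal (fun i => (RCLike.ofReal (1 - hH.eigenvalues i) : ℂ)) * star U := by
    have hd : Matrix.diagonal (fun i => (RCLike.ofReal (1 - hH.eigenvalues i) : ℂ)) =
        1 - Matrix.diagonal (RCLike.ofReal ∘ hH.eigenvalues) := by
      rw [← Matrix.diagonal_one, Matrix.diagonal_sub]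
      ext i
      simp [RCLike.ofReal_sub, RCLike.ofReal_one]
    rw [hd, Matrix.mul_sub, Matrix.mul_one, Matrix.sub_mul, hUU]
    conv_lhs => rw [hH.spectral_theorem, Unitary.conjStarAlgAut_apply]
  rw [key]
  have hdg : (Matrix.diagonal (fun i => (RCLike.ofReal (1 - hH.eigenvalues i) : ℂ))).PosSemidef := by
    apply Matrix.PosSemidef.diagonal
    intro i
    have h0 : (0 : ℂ) ≤ (RCLike.ofReal (1 - hH.eigenvalues i) : ℂ) := by
      rw [show ((RCLike.ofReal (1 - hH.eigenvalues i)) : ℂ) = ((1 - hH.eigenvalues i : ℝ) : ℂ)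
        from rfl, Complex.zero_le_real]
      linarith [heig i]
    simpa using h0
  exact hdg.mul_mul_conjTranspose_same U

lemma aux_std_psd {X : Type*} [Fintype X] [DecidableEq X] (x : X) :
    (Matrix.single x x (1 : ℂ)).PosSemidef := by
  rw [← Matrix.diagonal_single]
  exact Matrix.PosSemidef.diagonal (Pi.single_nonneg.mpr zero_le_one)

lemma aux_kron_sum {A B X : Type*} [Fintype X] (M : Matrix A A ℂ) (f : X → Matrix B B ℂ) :
    M ⊗ₖ (∑ x, f x) = ∑ x, M ⊗ₖ f x := by
  ext ⟨i, j⟩ ⟨k, l⟩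
  simp [Matrix.kroneckerMap_apply, Matrix.sum_apply, Finset.mul_sum]

lemma aux_zero_psd {n : Type*} [Fintype n] : (0 : Matrix n n ℂ).PosSemidef :=
  ⟨Matrix.isHermitian_zero, fun v => by simp⟩

lemma aux_sum_psd {n ι : Type*} [Fintype n] (s : Finset ι) (f : ι → Matrix n n ℂ)
    (h : ∀ i ∈ s, (f i).PosSemidef) : (∑ i ∈ s, f i).PosSemidef := by
  classical
  induction s using Finset.induction_on with
  | empty => simpa using aux_zero_psd
  | insert _ _ hx ih =>
    rw [Finset.sum_insert hx]
    exact Matrix.PosSemidef.add (h _ (Finset.mem_insert_self _ _))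
      (ih fun i hi => h i (Finset.mem_insert_of_mem hi))
def Sset {a b : Type*} [Fintype a] [Fintype b] [DecidableEq a] [DecidableEq b]
    (ρ : Matrix (a × b) (a × b) ℂ) : Set ℝ :=
  {x : ℝ | ∃ σ : Matrix b b ℂ, IsState σ ∧
    (((2 : ℝ) ^ (-x) : ℝ) • ((1 : Matrix a a ℂ) ⊗ₖ σ) - ρ).PosSemidef}

lemma aux_bddAbove {a b : Type*} [Fintype a] [Fintype b] [DecidableEq a] [DecidableEq b]
    {ρ : Matrix (a × b) (a × b) ℂ} (ht : ρ.trace = 1) :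
    BddAbove (Sset ρ) := by
  have hcA : (0 : ℝ) < Fintype.card a := by
    rcases Nat.eq_zero_or_pos (Fintype.card a) with h | h
    · exfalso
      have : IsEmpty a := Fintype.card_eq_zero_iff.mp h
      have : IsEmpty (a × b) := by infer_instance
      rw [Matrix.trace, Finset.univ_eq_empty, Finset.sum_empty] at ht
      exact zero_ne_one ht
    · exact_mod_cast h
  refine ⟨Real.logb 2 (Fintype.card a), fun t ht' => ?_⟩
  obtain ⟨σ, hσ, hpsd⟩ := ht'
  have h0 := aux_trace_re_nonneg hpsd
  have htr : ((((2 : ℝ) ^ (-t) : ℝ) • ((1 : Matrix a a ℂ) ⊗ₖ σ) - ρ)).trace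
      = (((2 : ℝ) ^ (-t) * Fintype.card a : ℝ) : ℂ) - 1 := by
    rw [Matrix.trace_sub, Matrix.trace_smul, Matrix.trace_kronecker, Matrix.trace_one, hσ.2, ht]
    rw [mul_one, Complex.real_smul]
    push_cast
    ring
  rw [htr] at h0
  have h1 : (1 : ℝ) ≤ (2 : ℝ) ^ (-t) * Fintype.card a := by
    rw [Complex.sub_re, Complex.ofReal_re, Complex.one_re] at h0
    linarith
  have hmul : (2 : ℝ) ^ t * (2 : ℝ) ^ (-t) = 1 := by
    rw [← Real.rpow_add (by norm_num : (0:ℝ) < 2)]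
    simp
  rw [Real.le_logb_iff_rpow_le (by norm_num : (1:ℝ) < 2) hcA]
  nlinarith [Real.rpow_pos_of_pos (show (0:ℝ) < 2 by norm_num) t]

lemma aux_nonempty {a b : Type*} [Fintype a] [Fintype b] [DecidableEq a] [DecidableEq b]
    [Nonempty b]
    {ρ : Matrix (a × b) (a × b) ℂ} (h : ρ.PosSemidef) (ht : ρ.trace = 1) :
    (-Real.logb 2 (Fintype.card b)) ∈ Sset ρ := by
  have hcB : (0 : ℝ) < Fintype.card b := by exact_mod_cast Fintype.card_pos
  refine ⟨((Fintype.card b : ℝ))⁻¹ • (1 : Matrix b b ℂ), ⟨?_, ?_⟩, ?_⟩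
  · exact aux_smul_psd Matrix.PosSemidef.one (by positivity)
  · rw [Matrix.trace_smul, Matrix.trace_one, Complex.real_smul]
    push_cast
    field_simp
  · have hpow : (2 : ℝ) ^ (-(-Real.logb 2 (Fintype.card b))) = (Fintype.card b : ℝ) := by
      rw [neg_neg]
      exact Real.rpow_logb (by norm_num) (by norm_num) hcB
    rw [hpow, Matrix.kronecker_smul, smul_smul, mul_inv_cancel₀ (ne_of_gt hcB), one_smul,
      Matrix.one_kronecker_one]
    exact aux_one_sub_psd h ht


/-- **Min-entropy of classical-quantum states.** -/
theorem Hmin_cq_state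
    {A B X : Type*} [Fintype A] [DecidableEq A] [Fintype B] [DecidableEq B]
    [Fintype X] [DecidableEq X]
    (p : X → ℝ) (hp : ∀ x, 0 ≤ p x) (hp1 : ∑ x, p x = 1)
    (ρx : X → Matrix (A × B) (A × B) ℂ) (hρx : ∀ x, IsState (ρx x))
    (ρ : Matrix (A × (B × X)) (A × (B × X)) ℂ)
    (hρ : ρ = Matrix.reindex (Equiv.prodAssoc A B X) (Equiv.prodAssoc A B X)
      (∑ x, (p x : ℂ) • (ρx x ⊗ₖ Matrix.single x x (1 : ℂ)))) :
    Hmin ρ = -Real.logb 2 (∑ x, p x * (2 : ℝ) ^ (-Hmin (ρx x))) := by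
  classical
  have h2pos : (0:ℝ) < 2 := by norm_num
  have h2gt : (1:ℝ) < 2 := by norm_num
  obtain ⟨x₀, hx₀⟩ : ∃ x, 0 < p x := by
    by_contra h
    push_neg at h
    have h0 : ∑ x, p x = 0 :=
      le_antisymm (Finset.sum_nonpos fun x _ => h x) (Finset.sum_nonneg fun x _ => hp x)
    rw [hp1] at h0
    exact one_ne_zero h0
  have hAB : Nonempty (A × B) := by
    by_contra h
    rw [not_nonempty_iff] at h
    have h2 := (hρx x₀).2
    rw [Matrix.trace, Finset.univ_eq_empty, Finset.sum_empty] at h2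
    exact zero_ne_one h2
  have hA : Nonempty A := ⟨hAB.some.1⟩
  have hB : Nonempty B := ⟨hAB.some.2⟩
  set K : ℝ := ∑ x, p x * (2:ℝ) ^ (-Hmin (ρx x)) with hK
  have hterm_nonneg : ∀ x : X, 0 ≤ p x * (2:ℝ) ^ (-Hmin (ρx x)) :=
    fun x => mul_nonneg (hp x) (Real.rpow_pos_of_pos h2pos _).le
  have hKpos : 0 < K := by
    have h1 : 0 < p x₀ * (2:ℝ) ^ (-Hmin (ρx x₀)) := mul_pos hx₀ (Real.rpow_pos_of_pos h2pos _)
    exact lt_of_lt_of_le h1 (Finset.single_le_sum (fun x _ => hterm_nonneg x) (Finset.mem_univ x₀))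
  have hSx_bdd : ∀ x : X, BddAbove (Sset (ρx x)) := fun x => aux_bddAbove (hρx x).2
  have hSx_ne : ∀ x : X, (Sset (ρx x)).Nonempty :=
    fun x => ⟨_, aux_nonempty (hρx x).1 (hρx x).2⟩
  have hHx : ∀ x : X, Hmin (ρx x) = sSup (Sset (ρx x)) := fun _ => rfl
  have hρtr : ρ.trace = 1 := by
    rw [hρ]
    have htr_reindex : ∀ (M : Matrix ((A × B) × X) ((A × B) × X) ℂ),
        ((Matrix.reindex (Equiv.prodAssoc A B X) (Equiv.prodAssoc A B X)) M).trace = M.trace := by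
      intro M
      rw [Matrix.reindex_apply, Matrix.trace, Matrix.trace]
      exact Fintype.sum_equiv (Equiv.prodAssoc A B X).symm _ _ fun i => rfl
    rw [htr_reindex, Matrix.trace_sum]
    have : ∀ x : X, ((p x : ℂ) • (ρx x ⊗ₖ Matrix.single x x (1:ℂ))).trace = (p x : ℂ) := by
      intro x
      rw [Matrix.trace_smul, Matrix.trace_kronecker, (hρx x).2,
        Matrix.trace_single_eq_same]
      simp
    rw [Finset.sum_congr rfl fun x _ => this x]
    rw [← Complex.ofReal_sum, hp1, Complex.ofReal_one]
  have hρbdd : BddAbove (Sset ρ) := aux_bddAbove hρtr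
  -- upper bound
  have hub : ∀ t ∈ Sset ρ, t ≤ -Real.logb 2 K := by
    intro t ht
    obtain ⟨σ, hσ, hpsd⟩ := ht
    set σx : X → Matrix B B ℂ := fun x => σ.submatrix (fun b => (b, x)) (fun b => (b, x))
      with hσxdef
    have hσxpsd : ∀ x : X, (σx x).PosSemidef := fun x => hσ.1.submatrix _
    have key : ∀ x : X, ((((2:ℝ) ^ (-t) : ℝ)) • ((1 : Matrix A A ℂ) ⊗ₖ σx x)
        - (p x : ℝ) • ρx x).PosSemidef := by
      intro x
      have h1 := hpsd.submatrix (fun ab : A × B => (ab.1, (ab.2, x)))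
      have h2 : ((((2:ℝ) ^ (-t) : ℝ) • ((1 : Matrix A A ℂ) ⊗ₖ σ) - ρ).submatrix
          (fun ab : A × B => (ab.1, (ab.2, x))) (fun ab : A × B => (ab.1, (ab.2, x))))
          = ((2:ℝ) ^ (-t) : ℝ) • ((1 : Matrix A A ℂ) ⊗ₖ σx x) - (p x : ℝ) • ρx x := by
        ext ⟨a, b⟩ ⟨a', b'⟩
        rw [hρ]
        simp only [Matrix.submatrix_apply, Matrix.sub_apply, Matrix.smul_apply,
          Matrix.kroneckerMap_apply, Matrix.reindex_apply, Matrix.sum_apply,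
          Matrix.single, Matrix.one_apply, Equiv.prodAssoc_symm_apply,
          Matrix.of_apply, smul_eq_mul, Complex.real_smul, hσxdef]
        congr 1
        rw [Finset.sum_congr rfl (fun y _ => by
          rw [show (if y = x ∧ y = x then (1:ℂ) else 0) = if y = x then 1 else 0 by simp [and_self],
            mul_ite, mul_one, mul_zero, mul_ite, mul_zero])]
        rw [Finset.sum_ite_eq' Finset.univ x (fun y => (p y : ℂ) * ρx y (a, b) (a', b'))]
        simp
      rw [h2] at h1
      exact h1
    have main : ∀ x : X, p x * (2:ℝ) ^ (-(Hmin (ρx x))) ≤ (2:ℝ) ^ (-t) * (σx x).trace.re := by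
      intro x
      have hq0 : 0 ≤ (σx x).trace.re := aux_trace_re_nonneg (hσxpsd x)
      rcases eq_or_lt_of_le (hp x) with hpx | hpx
      · rw [← hpx, zero_mul]
        positivity
      · have htr0 := aux_trace_re_nonneg (key x)
        have hcA : (0:ℝ) < Fintype.card A := by exact_mod_cast Fintype.card_pos
        have htr_eq : ((((2:ℝ) ^ (-t) : ℝ)) • ((1 : Matrix A A ℂ) ⊗ₖ σx x)
            - (p x : ℝ) • ρx x).trace.re
            = (2:ℝ) ^ (-t) * (Fintype.card A * (σx x).trace.re) - p x := by
          rw [Matrix.trace_sub, Matrix.trace_smul, Matrix.trace_smul, Matrix.trace_kronecker,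
            Matrix.trace_one, (hρx x).2]
          simp [Complex.real_smul, Complex.mul_re, Complex.sub_re, Complex.ofReal_re,
            Complex.ofReal_im, Complex.one_re, Complex.one_im]
        rw [htr_eq] at htr0
        have hq : 0 < (σx x).trace.re := by
          have h2t := Real.rpow_pos_of_pos h2pos (-t)
          nlinarith [mul_pos h2t hcA]
        set q := (σx x).trace.re with hqdef
        set c := (2:ℝ) ^ (-t) * q / p x with hcdef
        have hc : 0 < c := by positivity
        have hμmem : (-Real.logb 2 c) ∈ Sset (ρx x) := by
          refine ⟨(q⁻¹ : ℝ) • σx x, ⟨aux_smul_psd (hσxpsd x) (by positivity), ?_⟩, ?_⟩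
          · rw [Matrix.trace_smul, aux_trace_real (hσxpsd x).isHermitian, ← hqdef,
              Complex.real_smul, ← Complex.ofReal_mul, inv_mul_cancel₀ (ne_of_gt hq),
              Complex.ofReal_one]
          · have hpow : (2:ℝ) ^ (-(-Real.logb 2 c)) = c := by
              rw [neg_neg]; exact Real.rpow_logb h2pos (by norm_num) hc
            rw [hpow, Matrix.kronecker_smul, smul_smul]
            have hsc : c * q⁻¹ = (p x)⁻¹ * ((2:ℝ) ^ (-t)) := by
              rw [hcdef]; field_simp
            rw [hsc, ← smul_smul]
            have heq2 : (p x)⁻¹ • ((((2:ℝ) ^ (-t) : ℝ)) • ((1 : Matrix A A ℂ) ⊗ₖ σx x)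
                - (p x : ℝ) • ρx x)
                = (p x)⁻¹ • (((2:ℝ) ^ (-t) : ℝ) • ((1 : Matrix A A ℂ) ⊗ₖ σx x)) - ρx x := by
              rw [smul_sub]
              congr 1
              rw [smul_smul, inv_mul_cancel₀ (ne_of_gt hpx), one_smul]
            rw [← heq2]
            exact aux_smul_psd (key x) (by positivity)
        have hμle : -Real.logb 2 c ≤ Hmin (ρx x) := le_csSup (hSx_bdd x) hμmem
        have hrle : (2:ℝ) ^ (-(Hmin (ρx x))) ≤ c := by
          calc (2:ℝ) ^ (-(Hmin (ρx x))) ≤ (2:ℝ) ^ (Real.logb 2 c) := by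
                rw [Real.rpow_le_rpow_left_iff h2gt]; linarith
            _ = c := Real.rpow_logb h2pos (by norm_num) hc
        calc p x * (2:ℝ) ^ (-(Hmin (ρx x))) ≤ p x * c := by nlinarith
          _ = (2:ℝ) ^ (-t) * q := by rw [hcdef]; field_simp
    have htrσ : ∑ x : X, (σx x).trace.re = 1 := by
      have h1 : ∑ x : X, (σx x).trace = σ.trace := by
        simp only [Matrix.trace, Matrix.diag, hσxdef, Matrix.submatrix_apply]
        rw [Fintype.sum_prod_type, Finset.sum_comm]
      have h2 := congrArg Complex.re h1
      rw [hσ.2] at h2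
      simpa [Complex.re_sum] using h2
    have hfinal : K ≤ (2:ℝ) ^ (-t) := by
      calc K ≤ ∑ x : X, (2:ℝ) ^ (-t) * (σx x).trace.re := by
            rw [hK]
            exact Finset.sum_le_sum fun x _ => main x
        _ = (2:ℝ) ^ (-t) := by rw [← Finset.mul_sum, htrσ, mul_one]
    have hlogb : Real.logb 2 K ≤ -t := by
      calc Real.logb 2 K ≤ Real.logb 2 ((2:ℝ) ^ (-t)) :=
            Real.logb_le_logb_of_le h2gt hKpos hfinal
        _ = -t := Real.logb_rpow h2pos (by norm_num)
    linarith
  -- lower bound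
  have hlb : ∀ t, t < -Real.logb 2 K → t ∈ Sset ρ := by
    intro t ht
    have hKlt : K < (2:ℝ) ^ (-t) := by
      have h1 : Real.logb 2 K < -t := by linarith
      calc K = (2:ℝ) ^ (Real.logb 2 K) := (Real.rpow_logb h2pos (by norm_num) hKpos).symm
        _ < (2:ℝ) ^ (-t) := by rw [Real.rpow_lt_rpow_left_iff h2gt]; exact h1
    set ε := (2:ℝ) ^ (-t) - K with hεdef
    have hεpos : 0 < ε := by rw [hεdef]; linarith
    have hchoose : ∀ x : X, ∃ μ ∈ Sset (ρx x),
        (2:ℝ) ^ (-μ) ≤ (2:ℝ) ^ (-Hmin (ρx x)) + ε := by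
      intro x
      set hmx := Hmin (ρx x) with hhm
      have haux : (0:ℝ) < 1 + ε * (2:ℝ) ^ hmx := by
        nlinarith [Real.rpow_pos_of_pos h2pos hmx]
      have hδpos : 0 < Real.logb 2 (1 + ε * (2:ℝ) ^ hmx) :=
        Real.logb_pos h2gt (by nlinarith [Real.rpow_pos_of_pos h2pos hmx])
      set δ := Real.logb 2 (1 + ε * (2:ℝ) ^ hmx) with hδdef
      have hlt : hmx - δ < sSup (Sset (ρx x)) := by rw [← hHx x]; linarith
      obtain ⟨μ, hμmem, hμgt⟩ := exists_lt_of_lt_csSup (hSx_ne x) hlt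
      refine ⟨μ, hμmem, ?_⟩
      have h1 : (2:ℝ) ^ (-μ) ≤ (2:ℝ) ^ (-(hmx - δ)) := by
        rw [Real.rpow_le_rpow_left_iff h2gt]; linarith
      have h2 : (2:ℝ) ^ (-(hmx - δ)) = (2:ℝ) ^ (-hmx) + ε := by
        rw [show -(hmx - δ) = -hmx + δ by ring, Real.rpow_add h2pos, hδdef,
          Real.rpow_logb h2pos (by norm_num) haux, mul_add, mul_one]
        have hx1 : (2:ℝ) ^ (-hmx) * (2:ℝ) ^ hmx = 1 := by
          rw [← Real.rpow_add h2pos]; simp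
        linear_combination ε * hx1
      linarith
    choose μf hμmem hμle using hchoose
    choose σf hσf hσfpsd using fun x => hμmem x
    set c : X → ℝ := fun x => (2:ℝ) ^ t * (p x * (2:ℝ) ^ (-(μf x))) with hcdef
    have hcnn : ∀ x : X, 0 ≤ c x := fun x =>
      mul_nonneg (Real.rpow_pos_of_pos h2pos t).le
        (mul_nonneg (hp x) (Real.rpow_pos_of_pos h2pos _).le)
    have h2t2 : (2:ℝ) ^ t * (2:ℝ) ^ (-t) = 1 := by
      rw [← Real.rpow_add h2pos]; simp
    have hct : ∀ x : X, (2:ℝ) ^ (-t) * c x = p x * (2:ℝ) ^ (-(μf x)) := by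
      intro x
      rw [hcdef]
      calc (2:ℝ) ^ (-t) * ((2:ℝ) ^ t * (p x * (2:ℝ) ^ (-(μf x))))
          = ((2:ℝ) ^ t * (2:ℝ) ^ (-t)) * (p x * (2:ℝ) ^ (-(μf x))) := by ring
        _ = p x * (2:ℝ) ^ (-(μf x)) := by rw [h2t2, one_mul]
    have hsumc : ∑ x : X, c x ≤ 1 := by
      have h1 : ∑ x : X, p x * (2:ℝ) ^ (-(μf x)) ≤ K + ε := by
        calc ∑ x : X, p x * (2:ℝ) ^ (-(μf x))
            ≤ ∑ x : X, (p x * ((2:ℝ) ^ (-Hmin (ρx x)) + ε)) :=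
              Finset.sum_le_sum fun x _ => mul_le_mul_of_nonneg_left (hμle x) (hp x)
          _ = K + ε := by
              simp only [mul_add, Finset.sum_add_distrib, ← Finset.sum_mul, hp1, one_mul, hK]
      calc ∑ x : X, c x = (2:ℝ) ^ t * ∑ x : X, p x * (2:ℝ) ^ (-(μf x)) := by
            rw [hcdef, Finset.mul_sum]
        _ ≤ (2:ℝ) ^ t * ((2:ℝ) ^ (-t)) := by
            have hKε : K + ε = (2:ℝ) ^ (-t) := by rw [hεdef]; ring
            rw [← hKε]
            exact mul_le_mul_of_nonneg_left h1 (Real.rpow_pos_of_pos h2pos t).le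
        _ = 1 := h2t2
    set r := 1 - ∑ x : X, c x with hrdef
    have hrnn : 0 ≤ r := by rw [hrdef]; linarith
    have hcB : (0:ℝ) < Fintype.card B := by exact_mod_cast Fintype.card_pos
    set τ : Matrix B B ℂ := ((Fintype.card B : ℝ))⁻¹ • (1 : Matrix B B ℂ) with hτdef
    have hτpsd : τ.PosSemidef := aux_smul_psd Matrix.PosSemidef.one (by positivity)
    have hτtr : τ.trace = 1 := by
      rw [hτdef, Matrix.trace_smul, Matrix.trace_one, Complex.real_smul]
      push_cast
      field_simp
    set σ : Matrix (B × X) (B × X) ℂ :=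
      (∑ x : X, c x • (σf x ⊗ₖ Matrix.single x x (1:ℂ)))
        + r • (τ ⊗ₖ Matrix.single x₀ x₀ (1:ℂ)) with hσdef
    refine ⟨σ, ⟨?_, ?_⟩, ?_⟩
    · exact Matrix.PosSemidef.add
        (aux_sum_psd _ _ fun x _ =>
          aux_smul_psd (aux_kron_psd (hσf x).1 (aux_std_psd x)) (hcnn x))
        (aux_smul_psd (aux_kron_psd hτpsd (aux_std_psd x₀)) hrnn)
    · have hterm : ∀ x : X, (c x • (σf x ⊗ₖ Matrix.single x x (1:ℂ))).trace
          = (c x : ℂ) := by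
        intro x
        rw [Matrix.trace_smul, Matrix.trace_kronecker, (hσf x).2,
          Matrix.trace_single_eq_same]
        simp [Complex.real_smul]
      rw [hσdef, Matrix.trace_add, Matrix.trace_sum, Matrix.trace_smul,
        Matrix.trace_kronecker, hτtr, Matrix.trace_single_eq_same,
        Finset.sum_congr rfl fun x _ => hterm x]
      rw [← Complex.ofReal_sum]
      simp only [Complex.real_smul, hrdef]
      push_cast
      ring
    · -- PSD condition
      set D : Matrix ((A × B) × X) ((A × B) × X) ℂ :=
        (∑ x : X, (p x : ℝ) • (((((2:ℝ) ^ (-(μf x)) : ℝ)) • ((1 : Matrix A A ℂ) ⊗ₖ σf x)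
            - ρx x) ⊗ₖ Matrix.single x x (1:ℂ)))
          + (((2:ℝ) ^ (-t)) * r) • (((1 : Matrix A A ℂ) ⊗ₖ τ) ⊗ₖ
              Matrix.single x₀ x₀ (1:ℂ)) with hDdef
      have hDpsd : D.PosSemidef :=
        Matrix.PosSemidef.add
          (aux_sum_psd _ _ fun x _ =>
            aux_smul_psd (aux_kron_psd (hσfpsd x) (aux_std_psd x)) (hp x))
          (aux_smul_psd
            (aux_kron_psd (aux_kron_psd Matrix.PosSemidef.one hτpsd) (aux_std_psd x₀))
            (mul_nonneg (Real.rpow_pos_of_pos h2pos (-t)).le hrnn))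
      have hG : (((2:ℝ) ^ (-t) : ℝ)) • ((1 : Matrix A A ℂ) ⊗ₖ σ) - ρ
          = Matrix.reindex (Equiv.prodAssoc A B X) (Equiv.prodAssoc A B X) D := by
        ext ⟨a, b, y⟩ ⟨a', b', y'⟩
        rw [hρ, hσdef, hDdef]
        simp only [Matrix.reindex_apply, Matrix.submatrix_apply, Matrix.sub_apply,
          Matrix.add_apply, Matrix.smul_apply, Matrix.sum_apply, Matrix.kroneckerMap_apply,
          Matrix.single, Matrix.one_apply, Equiv.prodAssoc_symm_apply,
          Matrix.of_apply, smul_eq_mul, Complex.real_smul]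
        by_cases hyy : y = y'
        · subst hyy
          simp only [and_self, mul_ite, ite_mul, mul_one, mul_zero, zero_mul,
            Finset.sum_ite_eq', Finset.mem_univ, if_true]
          by_cases haa : a = a'
          · subst haa
            simp only [if_true, one_mul]
            have hcty := congrArg (fun z : ℝ => (z : ℂ)) (hct y)
            push_cast at hcty ⊢
            by_cases hx0 : x₀ = y
            · simp only [if_pos hx0]
              linear_combination (σf y b b') * hcty
            · simp only [if_neg hx0]
              linear_combination (σf y b b') * hcty
          · simp only [haa, if_false, zero_mul, mul_zero]
            by_cases hx0 : x₀ = y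
            · simp only [if_pos hx0]
              ring
            · simp only [if_neg hx0]
              ring
        · have hfalse : ∀ x : X, (x = y ∧ x = y') = False :=
            fun x => eq_false (fun h => hyy (h.1.symm.trans h.2))
          simp only [hfalse, if_false, mul_zero, zero_mul, Finset.sum_const_zero,
            add_zero, sub_zero, sub_self]
      rw [hG, Matrix.reindex_apply]
      exact hDpsd.submatrix _
  have hSne : (Sset ρ).Nonempty := ⟨-Real.logb 2 K - 1, hlb _ (by linarith)⟩
  show sSup (Sset ρ) = -Real.logb 2 K
  apply le_antisymm
  · exact csSup_le hSne hub
  · by_contra h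
    push_neg at h
    obtain ⟨t, ht1, ht2⟩ := exists_between h
    exact absurd (le_csSup hρbdd (hlb t ht2)) (not_le.mpr ht1)


end
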